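/- The double integral ∫_𝔻 ∫_𝔻 |conj(z) − conj(w)|²/|1 − z·conj(w)|⁴ dλ(z) dλ(w) is finite; equivalently, the kernel (z,w) ↦ (conj(z) − conj(w))·B(z,w), where B(z,w) = (1/π)(1 − z·conj(w))^{−2} is the Bergman kernel of the unit disc, is square integrable over 𝔻 × 𝔻. -/

import Mathlib

open MeasureTheory Metric Set
open scoped ENNReal NNReal

private lemma normSq_key (z w : ℂ) :
    Complex.normSq (1 - z * (starRingEnd ℂ) w)
      = Complex.normSq (z - w) + (1 - Complex.normSq z) * (1 - Complex.normSq w) := by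
  simp only [Complex.normSq_apply, Complex.sub_re, Complex.sub_im, Complex.mul_re, Complex.mul_im,
    Complex.one_re, Complex.one_im, Complex.conj_re, Complex.conj_im]
  ring

private lemma one_sub_mul_abs_le (z w : ℂ) :
    1 - norm z * norm w ≤ norm (1 - z * (starRingEnd ℂ) w) := by
  have h := norm_sub_norm_le (1 : ℂ) (z * (starRingEnd ℂ) w)
  simpa [map_mul, Complex.norm_conj] using h

private lemma abs_sub_le_key {z w : ℂ} (hz : norm z ≤ 1) (hw : norm w ≤ 1) :
    norm (z - w) ≤ norm (1 - z * (starRingEnd ℂ) w) := by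
  have h1 : Complex.normSq z ≤ 1 := by
    rw [← Complex.sq_norm]; nlinarith [norm_nonneg z]
  have h2 : Complex.normSq w ≤ 1 := by
    rw [← Complex.sq_norm]; nlinarith [norm_nonneg w]
  have h3 : Complex.normSq (z - w) ≤ Complex.normSq (1 - z * (starRingEnd ℂ) w) := by
    have h := normSq_key z w; nlinarith [Complex.normSq_nonneg (z - w)]
  rw [← Complex.sq_norm, ← Complex.sq_norm] at h3
  exact (pow_le_pow_iff_left₀ (norm_nonneg _) (norm_nonneg _) two_ne_zero).mp h3

private lemma abs_one_sub_pos {z w : ℂ} (hz : norm z < 1) (hw : norm w < 1) :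
    0 < norm (1 - z * (starRingEnd ℂ) w) := by
  have h := one_sub_mul_abs_le z w
  nlinarith [norm_nonneg z, norm_nonneg w]

private lemma f_le {z w : ℂ} (hz : norm z < 1) (hw : norm w < 1) :
    norm ((starRingEnd ℂ) z - (starRingEnd ℂ) w) ^ 2 /
        norm (1 - z * (starRingEnd ℂ) w) ^ 4
      ≤ 1 / norm (1 - z * (starRingEnd ℂ) w) ^ 2 := by
  have hconj : norm ((starRingEnd ℂ) z - (starRingEnd ℂ) w) = norm (z - w) := by
    rw [← map_sub, Complex.norm_conj]
  have h1 := abs_sub_le_key hz.le hw.le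
  have hpos := abs_one_sub_pos hz hw
  have h1' : norm (z - w) ^ 2 ≤ norm (1 - z * (starRingEnd ℂ) w) ^ 2 := by
    nlinarith [norm_nonneg (z - w)]
  rw [hconj, div_le_div_iff₀ (by positivity) (by positivity)]
  nlinarith [h1', sq_nonneg (norm (1 - z * (starRingEnd ℂ) w))]

private lemma ofReal_le_geom {a : ℝ} (ha : 0 < a) :
    ENNReal.ofReal (1 / a ^ 2)
      ≤ 1 + ∑' n : ℕ, (4 : ℝ≥0∞) ^ (n + 1) * (if a ≤ (2 : ℝ)⁻¹ ^ n then 1 else 0) := by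
  classical
  rcases le_or_gt a 1 with h | h
  · have hex : ∃ n : ℕ, (2 : ℝ)⁻¹ ^ n < a := exists_pow_lt_of_lt_one ha (by norm_num)
    have hN := Nat.find_spec hex
    have hN0 : Nat.find hex ≠ 0 := by
      intro h0
      rw [h0, pow_zero] at hN
      linarith
    obtain ⟨M, hM⟩ := Nat.exists_eq_succ_of_ne_zero hN0
    have hMle : a ≤ (2 : ℝ)⁻¹ ^ M := by
      have hmin := Nat.find_min hex (m := M) (by omega)
      linarith [le_of_not_gt hmin]
    have hlt : (2 : ℝ)⁻¹ ^ (M + 1) < a := by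
      rw [hM, Nat.succ_eq_add_one] at hN; exact hN
    have h44 : (4 : ℝ) ^ (M + 1) * ((2 : ℝ)⁻¹ ^ (M + 1)) ^ 2 = 1 := by
      rw [pow_two, ← mul_pow, ← mul_pow]
      norm_num
    have hb : (0 : ℝ) < (2 : ℝ)⁻¹ ^ (M + 1) := by positivity
    have hsq : ((2 : ℝ)⁻¹ ^ (M + 1)) ^ 2 ≤ a ^ 2 := by nlinarith
    have key : (1 / a ^ 2 : ℝ) ≤ 4 ^ (M + 1) := by
      rw [div_le_iff₀ (by positivity)]
      have h4pos : (0 : ℝ) < 4 ^ (M + 1) := by positivity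
      nlinarith
    calc ENNReal.ofReal (1 / a ^ 2) ≤ ENNReal.ofReal ((4 : ℝ) ^ (M + 1)) :=
          ENNReal.ofReal_le_ofReal key
      _ = (4 : ℝ≥0∞) ^ (M + 1) := by
          rw [ENNReal.ofReal_pow (by norm_num)]
          norm_num
      _ = (4 : ℝ≥0∞) ^ (M + 1) * (if a ≤ (2 : ℝ)⁻¹ ^ M then 1 else 0) := by
          rw [if_pos hMle, mul_one]
      _ ≤ ∑' n : ℕ, (4 : ℝ≥0∞) ^ (n + 1) * (if a ≤ (2 : ℝ)⁻¹ ^ n then 1 else 0) :=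
          ENNReal.le_tsum M
      _ ≤ _ := le_add_self
  · have hle : (1 / a ^ 2 : ℝ) ≤ 1 := by
      rw [div_le_one (by positivity)]; nlinarith
    calc ENNReal.ofReal (1 / a ^ 2) ≤ ENNReal.ofReal 1 := ENNReal.ofReal_le_ofReal hle
      _ = 1 := ENNReal.ofReal_one
      _ ≤ _ := self_le_add_right 1 _

private lemma setLIntegral_mono_on {s : Set ℂ} (hs : MeasurableSet s) {f g : ℂ → ℝ≥0∞}
    (h : ∀ x ∈ s, f x ≤ g x) : ∫⁻ x in s, f x ≤ ∫⁻ x in s, g x :=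
  lintegral_mono_ae ((ae_restrict_iff' hs).mpr (ae_of_all _ h))

/-- `∫_𝔻 ∫_𝔻 |conj z − conj w|²/|1 − z·conj w|⁴ dλ(z) dλ(w) < ∞`, i.e. the kernel
`(z,w) ↦ (conj z − conj w)·B(z,w)` of the canonical solution operator is square
integrable over `𝔻 × 𝔻`. -/
theorem integral_bergman_kernel_sq_lt_top :
    (∫⁻ w in Metric.ball (0 : ℂ) 1, ∫⁻ z in Metric.ball (0 : ℂ) 1,
      ENNReal.ofReal (‖(starRingEnd ℂ) z - (starRingEnd ℂ) w‖ ^ 2 /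
        ‖1 - z * (starRingEnd ℂ) w‖ ^ 4)) < ⊤ := by
  classical
  set D : Set ℂ := Metric.ball (0 : ℂ) 1 with hD
  set V : ℝ≥0∞ := volume D with hV
  have hVlt : V ≠ ⊤ := measure_ball_lt_top.ne
  set s : ℕ → ℝ := fun n => (2 : ℝ)⁻¹ ^ n with hsdef
  have hs_pos : ∀ n, 0 < s n := fun n => pow_pos (by norm_num) n
  have hs_le_one : ∀ n, s n ≤ 1 := fun n => pow_le_one₀ (by norm_num) (by norm_num)
  have hSmeas : ∀ (n : ℕ) (w : ℂ),
      MeasurableSet {z : ℂ | norm (1 - z * (starRingEnd ℂ) w) ≤ s n} := by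
    intro n w
    have hc : Continuous fun z : ℂ => norm (1 - z * (starRingEnd ℂ) w) :=
      continuous_norm.comp (continuous_const.sub (continuous_id.mul continuous_const))
    exact measurableSet_le hc.measurable measurable_const
  have hTmeas : ∀ n : ℕ, MeasurableSet {v : ℂ | 1 - s n ≤ norm v} :=
    fun n => measurableSet_le measurable_const continuous_norm.measurable
  have hmemD : ∀ {z : ℂ}, z ∈ D → norm z < 1 := by
    intro z hz
    simpa [hD, Complex.dist_eq] using mem_ball.mp hz
  -- the w-indicator bound for the inner integral
  have step3 : ∀ (n : ℕ) (w : ℂ), w ∈ D →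
      (∫⁻ z in D, Set.indicator
          {z : ℂ | norm (1 - z * (starRingEnd ℂ) w) ≤ s n} (fun _ => (1 : ℝ≥0∞)) z)
        ≤ Set.indicator {v : ℂ | 1 - s n ≤ norm v}
            (fun _ => ENNReal.ofReal (4 * s n ^ 2) * V) w := by
    intro n w hw
    by_cases hcase : 1 - s n ≤ norm w
    · rw [Set.indicator_of_mem (show w ∈ {v : ℂ | 1 - s n ≤ norm v} from hcase)]
      rw [lintegral_indicator (hSmeas n w), setLIntegral_one, Measure.restrict_apply (hSmeas n w)]
      have hsub : {z : ℂ | norm (1 - z * (starRingEnd ℂ) w) ≤ s n} ∩ D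
          ⊆ Metric.ball w (2 * s n) := by
        rintro z ⟨hz1, hz2⟩
        have hzD := hmemD hz2
        have h1 := abs_sub_le_key hzD.le (hmemD hw).le
        have : norm (z - w) ≤ s n := le_trans h1 hz1
        rw [mem_ball, Complex.dist_eq]
        nlinarith [hs_pos n]
      calc volume ({z : ℂ | norm (1 - z * (starRingEnd ℂ) w) ≤ s n} ∩ D)
          ≤ volume (Metric.ball w (2 * s n)) := measure_mono hsub
        _ = ENNReal.ofReal (4 * s n ^ 2) * V := by
            rw [Measure.addHaar_ball volume w (by positivity : (0:ℝ) ≤ 2 * s n),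
              Complex.finrank_real_complex]
            congr 2
            ring
    · rw [Set.indicator_of_notMem (show w ∉ {v : ℂ | 1 - s n ≤ norm v} from hcase)]
      have hz0 : ∀ z ∈ D, Set.indicator
          {z : ℂ | norm (1 - z * (starRingEnd ℂ) w) ≤ s n}
            (fun _ => (1 : ℝ≥0∞)) z = 0 := by
        intro z hz
        apply Set.indicator_of_notMem
        simp only [mem_setOf_eq, not_le]
        have h2 := one_sub_mul_abs_le z w
        have hzD := hmemD hz
        have hwabs : norm w < 1 - s n := lt_of_not_ge hcase
        nlinarith [norm_nonneg z, norm_nonneg w]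
      calc (∫⁻ z in D, Set.indicator
            {z : ℂ | norm (1 - z * (starRingEnd ℂ) w) ≤ s n} (fun _ => (1 : ℝ≥0∞)) z)
          ≤ ∫⁻ _ in D, 0 := setLIntegral_mono_on measurableSet_ball fun z hz => le_of_eq (hz0 z hz)
        _ = 0 := lintegral_zero
  -- the inner integral bound
  have inner_bound : ∀ w ∈ D,
      (∫⁻ z in D, ENNReal.ofReal (norm ((starRingEnd ℂ) z - (starRingEnd ℂ) w) ^ 2 /
          norm (1 - z * (starRingEnd ℂ) w) ^ 4))
        ≤ V + ∑' n : ℕ, (4 : ℝ≥0∞) ^ (n + 1) *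
            Set.indicator {v : ℂ | 1 - s n ≤ norm v}
              (fun _ => ENNReal.ofReal (4 * s n ^ 2) * V) w := by
    intro w hw
    have hw1 := hmemD hw
    calc (∫⁻ z in D, ENNReal.ofReal (norm ((starRingEnd ℂ) z - (starRingEnd ℂ) w) ^ 2 /
            norm (1 - z * (starRingEnd ℂ) w) ^ 4))
        ≤ ∫⁻ z in D, (1 + ∑' n : ℕ, (4 : ℝ≥0∞) ^ (n + 1) *
            Set.indicator {z : ℂ | norm (1 - z * (starRingEnd ℂ) w) ≤ s n}
              (fun _ => (1 : ℝ≥0∞)) z) := by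
          apply setLIntegral_mono_on measurableSet_ball
          intro z hz
          have hz1 := hmemD hz
          have hpos := abs_one_sub_pos hz1 hw1
          calc ENNReal.ofReal (norm ((starRingEnd ℂ) z - (starRingEnd ℂ) w) ^ 2 /
                norm (1 - z * (starRingEnd ℂ) w) ^ 4)
              ≤ ENNReal.ofReal (1 / norm (1 - z * (starRingEnd ℂ) w) ^ 2) :=
                ENNReal.ofReal_le_ofReal (f_le hz1 hw1)
            _ ≤ 1 + ∑' n : ℕ, (4 : ℝ≥0∞) ^ (n + 1) *
                  (if norm (1 - z * (starRingEnd ℂ) w) ≤ (2 : ℝ)⁻¹ ^ n then 1 else 0) :=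
                ofReal_le_geom hpos
            _ = 1 + ∑' n : ℕ, (4 : ℝ≥0∞) ^ (n + 1) *
                  Set.indicator {z : ℂ | norm (1 - z * (starRingEnd ℂ) w) ≤ s n}
                    (fun _ => (1 : ℝ≥0∞)) z := by
                simp only [Set.indicator_apply, mem_setOf_eq, hsdef]
      _ = V + ∑' n : ℕ, ∫⁻ z in D, (4 : ℝ≥0∞) ^ (n + 1) *
            Set.indicator {z : ℂ | norm (1 - z * (starRingEnd ℂ) w) ≤ s n}
              (fun _ => (1 : ℝ≥0∞)) z := by
          rw [lintegral_add_left measurable_const, setLIntegral_one,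
            lintegral_tsum fun n => ((measurable_const.indicator (hSmeas n w)).const_mul _).aemeasurable]
      _ = V + ∑' n : ℕ, (4 : ℝ≥0∞) ^ (n + 1) * ∫⁻ z in D,
            Set.indicator {z : ℂ | norm (1 - z * (starRingEnd ℂ) w) ≤ s n}
              (fun _ => (1 : ℝ≥0∞)) z := by
          congr 1
          exact tsum_congr fun n => lintegral_const_mul' _ _ (by simp)
      _ ≤ V + ∑' n : ℕ, (4 : ℝ≥0∞) ^ (n + 1) *
            Set.indicator {v : ℂ | 1 - s n ≤ norm v}
              (fun _ => ENNReal.ofReal (4 * s n ^ 2) * V) w :=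
          add_le_add_right (ENNReal.tsum_le_tsum fun n =>
            mul_le_mul_right (step3 n w hw) _) V
  -- the outer integral of each indicator
  have outer_ind : ∀ n : ℕ,
      (∫⁻ w in D, Set.indicator {v : ℂ | 1 - s n ≤ norm v}
          (fun _ => ENNReal.ofReal (4 * s n ^ 2) * V) w)
        ≤ ENNReal.ofReal (4 * s n ^ 2) * V * (ENNReal.ofReal (2 * s n) * V) := by
    intro n
    rw [lintegral_indicator (hTmeas n), setLIntegral_const, Measure.restrict_apply (hTmeas n)]
    apply mul_le_mul_right
    have hsub : {v : ℂ | 1 - s n ≤ norm v} ∩ D ⊆ D \ Metric.ball (0 : ℂ) (1 - s n) := by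
      rintro v ⟨hv1, hv2⟩
      replace hv1 : 1 - s n ≤ norm v := hv1
      refine ⟨hv2, ?_⟩
      intro hmem
      have : norm v < 1 - s n := by
        simpa [Complex.dist_eq] using mem_ball.mp hmem
      linarith
    have hball : volume (Metric.ball (0 : ℂ) (1 - s n)) = ENNReal.ofReal ((1 - s n) ^ 2) * V := by
      rw [Measure.addHaar_ball volume 0 (by linarith [hs_le_one n] : (0:ℝ) ≤ 1 - s n),
        Complex.finrank_real_complex]
    have hdiff : volume (D \ Metric.ball (0 : ℂ) (1 - s n))
        = V - volume (Metric.ball (0 : ℂ) (1 - s n)) := by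
      rw [hV]
      exact measure_diff (ball_subset_ball (by linarith [hs_pos n]))
        measurableSet_ball.nullMeasurableSet measure_ball_lt_top.ne
    calc volume ({v : ℂ | 1 - s n ≤ norm v} ∩ D)
        ≤ volume (D \ Metric.ball (0 : ℂ) (1 - s n)) := measure_mono hsub
      _ = V - volume (Metric.ball (0 : ℂ) (1 - s n)) := hdiff
      _ ≤ ENNReal.ofReal (2 * s n) * V := by
          rw [tsub_le_iff_right, hball]
          calc V = ENNReal.ofReal 1 * V := by rw [ENNReal.ofReal_one, one_mul]
            _ ≤ ENNReal.ofReal (2 * s n + (1 - s n) ^ 2) * V := by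
                apply mul_le_mul_left
                apply ENNReal.ofReal_le_ofReal
                nlinarith [sq_nonneg (s n)]
            _ = ENNReal.ofReal (2 * s n) * V + ENNReal.ofReal ((1 - s n) ^ 2) * V := by
                rw [ENNReal.ofReal_add (by positivity) (by positivity), add_mul]
  -- the geometric bound for each term of the sum
  have term_bound : ∀ n : ℕ,
      (4 : ℝ≥0∞) ^ (n + 1) * (ENNReal.ofReal (4 * s n ^ 2) * V * (ENNReal.ofReal (2 * s n) * V))
        ≤ 32 * (V * V) * (2 : ℝ≥0∞)⁻¹ ^ n := by
    intro n
    have hreal : (4 : ℝ) ^ (n + 1) * (4 * s n ^ 2) * (2 * s n) = 32 * (2 : ℝ)⁻¹ ^ n := by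
      simp only [hsdef]
      calc (4 : ℝ) ^ (n + 1) * (4 * ((2 : ℝ)⁻¹ ^ n) ^ 2) * (2 * (2 : ℝ)⁻¹ ^ n)
          = 32 * ((4 : ℝ) ^ n * ((2 : ℝ)⁻¹ ^ n * ((2 : ℝ)⁻¹ ^ n * (2 : ℝ)⁻¹ ^ n))) := by
            ring
        _ = 32 * ((4 : ℝ) * ((2 : ℝ)⁻¹ * ((2 : ℝ)⁻¹ * (2 : ℝ)⁻¹))) ^ n := by
            rw [← mul_pow ((2 : ℝ)⁻¹) ((2 : ℝ)⁻¹) n, ← mul_pow ((2 : ℝ)⁻¹) _ n,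
              ← mul_pow (4 : ℝ) _ n]
        _ = 32 * (2 : ℝ)⁻¹ ^ n := by norm_num
    have hofnat : ((4 : ℝ≥0∞) ^ (n + 1)) = ENNReal.ofReal ((4 : ℝ) ^ (n + 1)) := by
      rw [ENNReal.ofReal_pow (by norm_num : (0:ℝ) ≤ 4)]
      norm_num
    have hhalf : ((2 : ℝ≥0∞)⁻¹ ^ n) = ENNReal.ofReal ((2 : ℝ)⁻¹ ^ n) := by
      rw [ENNReal.ofReal_pow (by positivity : (0:ℝ) ≤ (2:ℝ)⁻¹),
        ENNReal.ofReal_inv_of_pos (by norm_num : (0:ℝ) < 2)]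
      norm_num
    apply le_of_eq
    calc (4 : ℝ≥0∞) ^ (n + 1) *
          (ENNReal.ofReal (4 * s n ^ 2) * V * (ENNReal.ofReal (2 * s n) * V))
        = (ENNReal.ofReal ((4 : ℝ) ^ (n + 1)) * ENNReal.ofReal (4 * s n ^ 2) *
            ENNReal.ofReal (2 * s n)) * (V * V) := by
          rw [hofnat]; ring
      _ = ENNReal.ofReal ((4 : ℝ) ^ (n + 1) * (4 * s n ^ 2) * (2 * s n)) * (V * V) := by
          rw [ENNReal.ofReal_mul (show (0:ℝ) ≤ (4:ℝ) ^ (n + 1) * (4 * s n ^ 2) by positivity),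
            ENNReal.ofReal_mul (show (0:ℝ) ≤ (4:ℝ) ^ (n + 1) by positivity)]
      _ = ENNReal.ofReal (32 * (2 : ℝ)⁻¹ ^ n) * (V * V) := by rw [hreal]
      _ = 32 * (V * V) * (2 : ℝ≥0∞)⁻¹ ^ n := by
          rw [ENNReal.ofReal_mul (by norm_num : (0:ℝ) ≤ 32), ← hhalf]
          have h32 : ENNReal.ofReal (32 : ℝ) = (32 : ℝ≥0∞) := by norm_num
          rw [h32]; ring
  -- assembling everything
  have hgeo : (∑' n : ℕ, (2 : ℝ≥0∞)⁻¹ ^ n) ≠ ⊤ := by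
    rw [ENNReal.tsum_geometric]
    refine ENNReal.inv_ne_top.mpr ?_
    simp [tsub_eq_zero_iff_le]
  calc (∫⁻ w in D, ∫⁻ z in D,
        ENNReal.ofReal (norm ((starRingEnd ℂ) z - (starRingEnd ℂ) w) ^ 2 /
          norm (1 - z * (starRingEnd ℂ) w) ^ 4))
      ≤ ∫⁻ w in D, (V + ∑' n : ℕ, (4 : ℝ≥0∞) ^ (n + 1) *
          Set.indicator {v : ℂ | 1 - s n ≤ norm v}
            (fun _ => ENNReal.ofReal (4 * s n ^ 2) * V) w) :=
        setLIntegral_mono_on measurableSet_ball inner_bound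
    _ = V * V + ∑' n : ℕ, ∫⁻ w in D, (4 : ℝ≥0∞) ^ (n + 1) *
          Set.indicator {v : ℂ | 1 - s n ≤ norm v}
            (fun _ => ENNReal.ofReal (4 * s n ^ 2) * V) w := by
        rw [lintegral_add_left measurable_const, setLIntegral_const,
          lintegral_tsum fun n => ((measurable_const.indicator (hTmeas n)).const_mul _).aemeasurable]
    _ = V * V + ∑' n : ℕ, (4 : ℝ≥0∞) ^ (n + 1) * ∫⁻ w in D,
          Set.indicator {v : ℂ | 1 - s n ≤ norm v}
            (fun _ => ENNReal.ofReal (4 * s n ^ 2) * V) w := by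
        congr 1
        exact tsum_congr fun n => lintegral_const_mul' _ _ (by simp)
    _ ≤ V * V + ∑' n : ℕ, (4 : ℝ≥0∞) ^ (n + 1) *
          (ENNReal.ofReal (4 * s n ^ 2) * V * (ENNReal.ofReal (2 * s n) * V)) :=
        add_le_add_right (ENNReal.tsum_le_tsum fun n =>
          mul_le_mul_right (outer_ind n) _) _
    _ ≤ V * V + ∑' n : ℕ, 32 * (V * V) * (2 : ℝ≥0∞)⁻¹ ^ n :=
        add_le_add_right (ENNReal.tsum_le_tsum term_bound) _
    _ = V * V + 32 * (V * V) * ∑' n : ℕ, (2 : ℝ≥0∞)⁻¹ ^ n := by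
        rw [ENNReal.tsum_mul_left]
    _ < ⊤ := by
        apply ENNReal.add_lt_top.mpr
        constructor
        · exact ENNReal.mul_lt_top hVlt.lt_top hVlt.lt_top
        · exact ENNReal.mul_lt_top
            (ENNReal.mul_lt_top (by simp) (ENNReal.mul_lt_top hVlt.lt_top hVlt.lt_top))
            hgeo.lt_top
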